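/- Let X_L, X_R ∈ ℂ^{n×m} and let X_L = U Σ Vᴴ be an economic SVD of rank r of X_L. Then Â := X_R V Σ⁻¹ Uᴴ (i.e. Â = X_R X_L†) solves the DMD least-squares problem: for every A ∈ ℂ^{n×n}, ‖X_R − Â X_L‖_F ≤ ‖X_R − A X_L‖_F. -/

import Mathlib

open Matrix

/-- The Frobenius norm of a complex matrix. -/
noncomputable def frobNorm {ι κ : Type*} [Fintype ι] [Fintype κ]
    (M : Matrix ι κ ℂ) : ℝ :=
  Real.sqrt (∑ i, ∑ j, ‖M i j‖ ^ 2)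

lemma frob_sq_eq_trace {ι κ : Type*} [Fintype ι] [Fintype κ] (M : Matrix ι κ ℂ) :
    ∑ i, ∑ j, ‖M i j‖ ^ 2 = (Matrix.trace (Mᴴ * M)).re := by
  rw [Finset.sum_comm]
  simp only [Matrix.trace, Matrix.diag, Matrix.mul_apply, Matrix.conjTranspose_apply,
    Complex.re_sum]
  congr 1; ext j; congr 1; ext i
  rw [show star (M i j) = (starRingEnd ℂ) (M i j) from rfl, ← Complex.normSq_eq_conj_mul_self]
  simp [Complex.normSq_eq_norm_sq, ← Complex.ofReal_pow]

/-- `Â = X_R V Σ⁻¹ Uᴴ = X_R X_L†` solves the DMD least-squares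
problem `min_A ‖X_R − A X_L‖_F`. -/
theorem dmd_least_squares_minimizer
    {n m r : ℕ}
    (XL XR : Matrix (Fin n) (Fin m) ℂ)
    (U : Matrix (Fin n) (Fin r) ℂ) (V : Matrix (Fin m) (Fin r) ℂ)
    (S : Matrix (Fin r) (Fin r) ℂ)
    (σ : Fin r → ℝ) (hσ : ∀ i, 0 < σ i)
    (hS : S = Matrix.diagonal fun i => (σ i : ℂ))
    (hU : Uᴴ * U = 1) (hV : Vᴴ * V = 1)
    (hSVD : XL = U * S * Vᴴ) :
    ∀ A : Matrix (Fin n) (Fin n) ℂ,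
      frobNorm (XR - (XR * (V * S⁻¹ * Uᴴ)) * XL) ≤ frobNorm (XR - A * XL) := by
  intro A
  set P : Matrix (Fin m) (Fin m) ℂ := V * Vᴴ with hP
  have hPherm : Pᴴ = P := by simp [hP, Matrix.conjTranspose_mul]
  have hPP : P * P = P := by
    rw [hP]
    calc V * Vᴴ * (V * Vᴴ) = V * (Vᴴ * V) * Vᴴ := by
          simp only [Matrix.mul_assoc]
      _ = V * Vᴴ := by rw [hV, Matrix.mul_one]
  have hSdet : IsUnit S.det := by
    rw [hS, Matrix.det_diagonal]
    refine IsUnit.mk0 _ (Finset.prod_ne_zero_iff.mpr fun i _ => ?_)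
    exact_mod_cast (hσ i).ne'
  have hSinv : S⁻¹ * S = 1 := Matrix.nonsing_inv_mul S hSdet
  have hXLP : XL * P = XL := by
    rw [hSVD, hP]
    calc U * S * Vᴴ * (V * Vᴴ) = U * S * (Vᴴ * V) * Vᴴ := by
          simp only [Matrix.mul_assoc]
      _ = U * S * Vᴴ := by rw [hV, Matrix.mul_one]
  have hAhat : XR * (V * S⁻¹ * Uᴴ) * XL = XR * P := by
    rw [hSVD, hP]
    calc XR * (V * S⁻¹ * Uᴴ) * (U * S * Vᴴ)
        = XR * (V * (S⁻¹ * ((Uᴴ * U) * S)) * Vᴴ) := by simp only [Matrix.mul_assoc]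
      _ = XR * (V * Vᴴ) := by rw [hU, Matrix.one_mul, hSinv, Matrix.mul_one]
  set B := XR - A * XL with hB
  set Q : Matrix (Fin m) (Fin m) ℂ := 1 - P with hQ
  have hQherm : Qᴴ = Q := by simp [hQ, hPherm]
  have hQQ : Q * Q = Q := by
    simp [hQ, Matrix.mul_sub, Matrix.sub_mul, hPP]
  have hkey : XR - XR * (V * S⁻¹ * Uᴴ) * XL = B * Q := by
    have hXLQ : XL * Q = 0 := by
      simp [hQ, Matrix.mul_sub, hXLP]
    rw [hAhat, hB, Matrix.sub_mul, Matrix.mul_assoc, hXLQ, Matrix.mul_zero, sub_zero,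
      hQ, Matrix.mul_sub, Matrix.mul_one]
  rw [hkey]
  unfold frobNorm
  apply Real.sqrt_le_sqrt
  have hpyth : ∑ i, ∑ j, ‖(B * Q) i j‖ ^ 2 + ∑ i, ∑ j, ‖(B * P) i j‖ ^ 2
      = ∑ i, ∑ j, ‖B i j‖ ^ 2 := by
    rw [frob_sq_eq_trace, frob_sq_eq_trace, frob_sq_eq_trace, ← Complex.add_re]
    congr 1
    have h1 : (B * Q)ᴴ * (B * Q) = Q * (Bᴴ * B) * Q := by
      rw [Matrix.conjTranspose_mul, hQherm]; simp only [Matrix.mul_assoc]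
    have h2 : (B * P)ᴴ * (B * P) = P * (Bᴴ * B) * P := by
      rw [Matrix.conjTranspose_mul, hPherm]; simp only [Matrix.mul_assoc]
    rw [h1, h2]
    have t1 : Matrix.trace (Q * (Bᴴ * B) * Q) = Matrix.trace (Bᴴ * B * Q) := by
      rw [Matrix.trace_mul_cycle, ← Matrix.mul_assoc, Matrix.mul_assoc, hQQ, Matrix.trace_mul_comm]
    have t2 : Matrix.trace (P * (Bᴴ * B) * P) = Matrix.trace (Bᴴ * B * P) := by
      rw [Matrix.trace_mul_cycle, ← Matrix.mul_assoc, Matrix.mul_assoc, hPP, Matrix.trace_mul_comm]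
    rw [t1, t2, ← Matrix.trace_add, ← Matrix.mul_add]
    have : Q + P = 1 := by simp [hQ]
    rw [this, Matrix.mul_one]
  have hnn : 0 ≤ ∑ i, ∑ j, ‖(B * P) i j‖ ^ 2 :=
    Finset.sum_nonneg fun i _ => Finset.sum_nonneg fun j _ => sq_nonneg _
  linarith
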